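/- Let f : ℝ^D → ℝ be almost everywhere positive and integrable with ∫ |v|² f(v) dv < ∞, number density n > 0 and temperature T > 0 (computed with particle mass m > 0), and let M = M[f] be the Maxwellian with the same number density, mean velocity and temperature as f. Assume f·log f, f·log M, M·log f and M·log M are integrable. Then the BGK entropy dissipation is nonpositive: ∫_{ℝ^D} (M(v) − f(v)) · log f(v) dv ≤ 0 (the H-theorem for the BGK operator). -/

import Mathlib

open MeasureTheory Real Set Filter Topology

/-- The Maxwellian distribution with number density `n`, mean velocity `vb`,
temperature `T` and particle mass `m` on `ℝ^D`. -/
noncomputable def maxwellian (D : ℕ) (m n T : ℝ) (vb : EuclideanSpace ℝ (Fin D))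
    (v : EuclideanSpace ℝ (Fin D)) : ℝ :=
  n * (m / (2 * Real.pi * T)) ^ ((D : ℝ) / 2) * Real.exp (-(m * ‖v - vb‖ ^ 2) / (2 * T))

/-- H-theorem for the BGK operator: the entropy dissipation
`∫ (M[f] − f) log f` is nonpositive, where `M[f]` is the Maxwellian with the
same number density, mean velocity and temperature as `f`. -/
lemma aux_int2_1d {b : ℝ} (hb : 0 < b) :
    Integrable (fun x : ℝ => x ^ 2 * Real.exp (-b * x ^ 2)) := by
  have := integrable_rpow_mul_exp_neg_mul_sq hb (s := 2) (by norm_num)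
  simpa [Real.rpow_natCast] using this

lemma aux_moment_1d {b : ℝ} (hb : 0 < b) :
    ∫ x : ℝ, x ^ 2 * Real.exp (-b * x ^ 2) = Real.sqrt (π / b) / (2 * b) := by
  have hb2 : (2 * b : ℝ) ≠ 0 := by positivity
  have hIoi2 : IntegrableOn (fun x : ℝ => x ^ 2 * Real.exp (-b * x ^ 2)) (Ioi 0) :=
    (aux_int2_1d hb).integrableOn
  have hIoi0 : IntegrableOn (fun x : ℝ => Real.exp (-b * x ^ 2)) (Ioi 0) :=
    (integrable_exp_neg_mul_sq hb).integrableOn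
  set F : ℝ → ℝ := fun x => -(2 * b)⁻¹ * (x * Real.exp (-b * x ^ 2)) with hF
  have hderiv : ∀ x ∈ Ici (0:ℝ), HasDerivAt F
      (x ^ 2 * Real.exp (-b * x ^ 2) - (2 * b)⁻¹ * Real.exp (-b * x ^ 2)) x := by
    intro x _
    have h1 : HasDerivAt (fun y : ℝ => -b * y ^ 2) (-b * (2 * x)) x := by
      simpa using ((hasDerivAt_pow 2 x)).const_mul (-b)
    have h2 := h1.exp
    have h3 := (hasDerivAt_id x).mul h2
    have h4 := h3.const_mul (-(2 * b)⁻¹)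
    refine h4.congr_deriv ?_
    simp only [id]
    field_simp
    ring
  have habs : Tendsto (fun x : ℝ => |x| ^ (1:ℝ) * Real.exp (-b * x ^ 2)) atTop (𝓝 0) :=
    (tendsto_rpow_abs_mul_exp_neg_mul_sq_cocompact hb 1).mono_left
      _root_.atTop_le_cocompact
  have htend : Tendsto F atTop (𝓝 0) := by
    have : Tendsto (fun x : ℝ => x * Real.exp (-b * x ^ 2)) atTop (𝓝 0) := by
      refine habs.congr' ?_
      filter_upwards [eventually_ge_atTop (0:ℝ)] with x hx
      rw [Real.rpow_one, abs_of_nonneg hx]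
    have h2 := this.const_mul (-(2 * b)⁻¹)
    simpa [hF, mul_comm] using h2
  have key := integral_Ioi_of_hasDerivAt_of_tendsto' hderiv
    (hIoi2.sub (hIoi0.const_mul _)) htend
  rw [integral_sub hIoi2 (hIoi0.const_mul _)] at key
  have hF0 : F 0 = 0 := by simp [hF]
  have hIval : ∫ x in Ioi (0:ℝ), x ^ 2 * Real.exp (-b * x ^ 2)
      = (2 * b)⁻¹ * (Real.sqrt (π / b) / 2) := by
    have hg : ∫ x in Ioi (0:ℝ), (2 * b)⁻¹ * Real.exp (-b * x ^ 2)
        = (2 * b)⁻¹ * (Real.sqrt (π / b) / 2) := by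
      rw [MeasureTheory.integral_const_mul, integral_gaussian_Ioi]
    rw [hF0, sub_zero] at key
    linarith [key, hg]
  calc ∫ x : ℝ, x ^ 2 * Real.exp (-b * x ^ 2)
      = ∫ x : ℝ, |x| ^ 2 * Real.exp (-b * |x| ^ 2) := by
        congr 1; ext x; rw [sq_abs]
    _ = 2 * ∫ x in Ioi (0:ℝ), x ^ 2 * Real.exp (-b * x ^ 2) :=
        integral_comp_abs (f := fun x => x ^ 2 * Real.exp (-b * x ^ 2))
    _ = Real.sqrt (π / b) / (2 * b) := by rw [hIval]; field_simp

lemma aux_factor_integrable {b : ℝ} (hb : 0 < b) (c : Prop) [Decidable c] :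
    Integrable (fun t : ℝ => (if c then t ^ 2 else 1) * Real.exp (-b * t ^ 2)) := by
  by_cases h : c
  · simpa [h] using aux_int2_1d hb
  · simpa [h] using integrable_exp_neg_mul_sq hb

lemma aux_pi_integrand_eq {D : ℕ} {b : ℝ} (x : Fin D → ℝ) :
    (∑ i, (x i) ^ 2) * Real.exp (-b * ∑ i, (x i) ^ 2)
      = ∑ i, ∏ j, ((if j = i then (x j) ^ 2 else 1) * Real.exp (-b * (x j) ^ 2)) := by
  rw [Finset.sum_mul]
  refine Finset.sum_congr rfl fun i _ => ?_
  rw [Finset.prod_mul_distrib, Finset.prod_ite_eq' Finset.univ i (fun j => (x j) ^ 2),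
    if_pos (Finset.mem_univ i), ← Real.exp_sum]
  have h2 : ∑ j, -b * (x j) ^ 2 = -b * ∑ j, (x j) ^ 2 := by
    rw [Finset.mul_sum]
  rw [h2]

lemma aux_pi_moment {D : ℕ} {b : ℝ} (hb : 0 < b) :
    ∫ x : Fin D → ℝ, (∑ i, (x i) ^ 2) * Real.exp (-b * ∑ i, (x i) ^ 2)
      = (D : ℝ) / (2 * b) * Real.sqrt (π / b) ^ D := by
  have hint : ∀ i : Fin D, Integrable (fun x : Fin D → ℝ =>
      ∏ j, ((if j = i then (x j) ^ 2 else 1) * Real.exp (-b * (x j) ^ 2))) := fun i =>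
    Integrable.fintype_prod (f := fun j t => (if j = i then t ^ 2 else 1) * Real.exp (-b * t ^ 2))
      (fun j => aux_factor_integrable hb _)
  calc ∫ x : Fin D → ℝ, (∑ i, (x i) ^ 2) * Real.exp (-b * ∑ i, (x i) ^ 2)
      = ∫ x : Fin D → ℝ, ∑ i, ∏ j, ((if j = i then (x j) ^ 2 else 1)
          * Real.exp (-b * (x j) ^ 2)) := by
        congr 1; ext x; exact aux_pi_integrand_eq x
    _ = ∑ i, ∫ x : Fin D → ℝ, ∏ j, ((if j = i then (x j) ^ 2 else 1)
          * Real.exp (-b * (x j) ^ 2)) := integral_finset_sum _ (fun i _ => hint i)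
    _ = ∑ i : Fin D, ∏ j : Fin D, ∫ t : ℝ, ((if j = i then t ^ 2 else 1)
          * Real.exp (-b * t ^ 2)) := by
        refine Finset.sum_congr rfl fun i _ => ?_
        exact integral_fintype_prod_eq_prod
          (fun j t => (if j = i then t ^ 2 else 1) * Real.exp (-b * t ^ 2))
    _ = (D : ℝ) / (2 * b) * Real.sqrt (π / b) ^ D := by
        have hval : ∀ i : Fin D, ∏ j : Fin D, (∫ t : ℝ, ((if j = i then t ^ 2 else 1)
            * Real.exp (-b * t ^ 2))) = (2 * b)⁻¹ * Real.sqrt (π / b) ^ D := by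
          intro i
          have h1 : ∀ j : Fin D, (∫ t : ℝ, ((if j = i then t ^ 2 else 1)
              * Real.exp (-b * t ^ 2)))
              = if j = i then Real.sqrt (π / b) / (2 * b) else Real.sqrt (π / b) := by
            intro j
            by_cases h : j = i
            · simp only [h, if_true]; exact aux_moment_1d hb
            · simp only [h, if_false, one_mul]; exact integral_gaussian b
          simp_rw [h1]
          rw [← Finset.mul_prod_erase Finset.univ _ (Finset.mem_univ i), if_pos rfl,
            Finset.prod_congr rfl (fun j hj => if_neg (Finset.ne_of_mem_erase hj)),
            Finset.prod_const, Finset.card_erase_of_mem (Finset.mem_univ i),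
            Finset.card_univ, Fintype.card_fin]
          have hD : D ≠ 0 := Nat.pos_iff_ne_zero.mp i.pos
          rw [div_eq_mul_inv, mul_comm (Real.sqrt (π / b)) (2 * b)⁻¹, mul_assoc,
            ← pow_succ' (Real.sqrt (π / b)) (D - 1), Nat.sub_add_cancel (Nat.one_le_iff_ne_zero.mpr hD)]
        simp_rw [hval]
        rw [Finset.sum_const, Finset.card_univ, Fintype.card_fin, nsmul_eq_mul]
        field_simp

lemma aux_pi_int2 {D : ℕ} {b : ℝ} (hb : 0 < b) :
    Integrable (fun x : Fin D → ℝ => (∑ i, (x i) ^ 2) * Real.exp (-b * ∑ i, (x i) ^ 2)) := by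
  have h : (fun x : Fin D → ℝ => (∑ i, (x i) ^ 2) * Real.exp (-b * ∑ i, (x i) ^ 2))
      = fun x => ∑ i, ∏ j, ((if j = i then (x j) ^ 2 else 1) * Real.exp (-b * (x j) ^ 2)) := by
    ext x; exact aux_pi_integrand_eq x
  rw [h]
  exact integrable_finset_sum _ (fun i _ => Integrable.fintype_prod
    (f := fun j t => (if j = i then t ^ 2 else 1) * Real.exp (-b * t ^ 2))
    (fun j => aux_factor_integrable hb _))

lemma aux_norm_comp {D : ℕ} (x : Fin D → ℝ) :
    ‖(MeasurableEquiv.toLp 2 (Fin D → ℝ)).symm.symm x‖ ^ 2 = ∑ i, (x i) ^ 2 := by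
  simp only [MeasurableEquiv.symm_symm, MeasurableEquiv.coe_toLp,
    EuclideanSpace.norm_eq, PiLp.toLp_apply, Real.norm_eq_abs, sq_abs]
  rw [Real.sq_sqrt]
  exact Finset.sum_nonneg fun i _ => sq_nonneg _

lemma aux_sqrt_pow {D : ℕ} {b : ℝ} (hb : 0 < b) :
    Real.sqrt (π / b) ^ D = (π / b) ^ ((D : ℝ) / 2) := by
  have h0 : (0:ℝ) ≤ π / b := by positivity
  rw [Real.sqrt_eq_rpow, ← Real.rpow_natCast ((π / b) ^ ((1:ℝ)/2)) D,
    ← Real.rpow_mul h0]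
  congr 1
  ring

lemma aux_euclid_moment {D : ℕ} {b : ℝ} (hb : 0 < b) :
    ∫ v : EuclideanSpace ℝ (Fin D), ‖v‖ ^ 2 * Real.exp (-b * ‖v‖ ^ 2)
      = (D : ℝ) / (2 * b) * (π / b) ^ ((D : ℝ) / 2) := by
  have e := (EuclideanSpace.volume_preserving_symm_measurableEquiv_toLp (Fin D)).symm
  rw [← e.integral_comp (MeasurableEquiv.measurableEmbedding _)]
  have : ∀ x : Fin D → ℝ,
      ‖(MeasurableEquiv.toLp 2 (Fin D → ℝ)).symm.symm x‖ ^ 2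
        * Real.exp (-b * ‖(MeasurableEquiv.toLp 2 (Fin D → ℝ)).symm.symm x‖ ^ 2)
      = (∑ i, (x i) ^ 2) * Real.exp (-b * ∑ i, (x i) ^ 2) := by
    intro x; rw [aux_norm_comp]
  calc ∫ x : Fin D → ℝ, ‖(MeasurableEquiv.toLp 2 (Fin D → ℝ)).symm.symm x‖ ^ 2
        * Real.exp (-b * ‖(MeasurableEquiv.toLp 2 (Fin D → ℝ)).symm.symm x‖ ^ 2)
      = ∫ x : Fin D → ℝ, (∑ i, (x i) ^ 2) * Real.exp (-b * ∑ i, (x i) ^ 2) := by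
        congr 1; ext x; exact this x
    _ = (D : ℝ) / (2 * b) * (π / b) ^ ((D : ℝ) / 2) := by
        rw [aux_pi_moment hb, aux_sqrt_pow hb]

lemma aux_euclid_int2 {D : ℕ} {b : ℝ} (hb : 0 < b) :
    Integrable (fun v : EuclideanSpace ℝ (Fin D) => ‖v‖ ^ 2 * Real.exp (-b * ‖v‖ ^ 2)) := by
  have e := (EuclideanSpace.volume_preserving_symm_measurableEquiv_toLp (Fin D)).symm
  rw [← e.integrable_comp_emb (MeasurableEquiv.measurableEmbedding _)]
  have h : ((fun v : EuclideanSpace ℝ (Fin D) => ‖v‖ ^ 2 * Real.exp (-b * ‖v‖ ^ 2))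
      ∘ (MeasurableEquiv.toLp 2 (Fin D → ℝ)).symm.symm)
      = fun x : Fin D → ℝ => (∑ i, (x i) ^ 2) * Real.exp (-b * ∑ i, (x i) ^ 2) := by
    ext x
    simp only [Function.comp_apply]
    rw [aux_norm_comp]
  rw [h]
  exact aux_pi_int2 hb

lemma aux_euclid_mass {D : ℕ} {b : ℝ} (hb : 0 < b) :
    ∫ v : EuclideanSpace ℝ (Fin D), Real.exp (-b * ‖v‖ ^ 2) = (π / b) ^ ((D : ℝ) / 2) := by
  have h := GaussianFourier.integral_rexp_neg_mul_sq_norm (V := EuclideanSpace ℝ (Fin D)) hb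
  rwa [finrank_euclideanSpace_fin] at h

lemma aux_euclid_int0 {D : ℕ} {b : ℝ} (hb : 0 < b) :
    Integrable (fun v : EuclideanSpace ℝ (Fin D) => Real.exp (-b * ‖v‖ ^ 2)) := by
  have e := (EuclideanSpace.volume_preserving_symm_measurableEquiv_toLp (Fin D)).symm
  rw [← e.integrable_comp_emb (MeasurableEquiv.measurableEmbedding _)]
  have h : ((fun v : EuclideanSpace ℝ (Fin D) => Real.exp (-b * ‖v‖ ^ 2))
      ∘ (MeasurableEquiv.toLp 2 (Fin D → ℝ)).symm.symm)
      = fun x : Fin D → ℝ => ∏ j, Real.exp (-b * (x j) ^ 2) := by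
    ext x
    simp only [Function.comp_apply]
    rw [aux_norm_comp, ← Real.exp_sum, Finset.mul_sum]
  rw [h]
  exact Integrable.fintype_prod (f := fun _ t => Real.exp (-b * t ^ 2))
    (fun j => integrable_exp_neg_mul_sq hb)

theorem bgk_entropy_dissipation_nonpos
    (D : ℕ) (hD : 1 ≤ D) (m : ℝ) (hm : 0 < m)
    (f : EuclideanSpace ℝ (Fin D) → ℝ)
    (hf_pos : ∀ᵐ v, 0 < f v)
    (hf_int : Integrable f)
    (hf_mom : Integrable (fun v => f v • v))
    (hf_en : Integrable (fun v => ‖v‖ ^ 2 * f v))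
    (n : ℝ) (hn_def : n = ∫ v, f v) (hn : 0 < n)
    (vb : EuclideanSpace ℝ (Fin D)) (hvb : n • vb = ∫ v, f v • v)
    (T : ℝ) (hT : 0 < T)
    (hT_def : (D : ℝ) / 2 * n * T = ∫ v, m / 2 * ‖v - vb‖ ^ 2 * f v)
    (hflogf : Integrable (fun v => f v * Real.log (f v)))
    (hflogM : Integrable (fun v => f v * Real.log (maxwellian D m n T vb v)))
    (hMlogf : Integrable (fun v => maxwellian D m n T vb v * Real.log (f v)))
    (hMlogM : Integrable (fun v =>
      maxwellian D m n T vb v * Real.log (maxwellian D m n T vb v))) :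
    (∫ v, (maxwellian D m n T vb v - f v) * Real.log (f v)) ≤ 0 := by
  set M := maxwellian D m n T vb with hM
  set B : ℝ := m / (2 * T) with hBdef
  set C : ℝ := n * (m / (2 * Real.pi * T)) ^ ((D : ℝ) / 2) with hCdef
  have hB : 0 < B := by positivity
  have hpi := Real.pi_pos
  have hC : 0 < C := by positivity
  have hMv : ∀ v, M v = C * Real.exp (-B * ‖v - vb‖ ^ 2) := by
    intro v
    rw [hM, maxwellian, hCdef, hBdef]
    congr 1
    ring
  have hMpos : ∀ v, 0 < M v := fun v => by
    rw [hMv v]; positivity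
  have hlogM : ∀ v, Real.log (M v) = Real.log C - B * ‖v - vb‖ ^ 2 := by
    intro v
    rw [hMv v, Real.log_mul hC.ne' (Real.exp_pos _).ne', Real.log_exp]
    ring
  -- key algebraic identity for the normalization
  have hCpi : C * (Real.pi / B) ^ ((D : ℝ) / 2) = n := by
    have h1 : (0:ℝ) ≤ m / (2 * Real.pi * T) := by positivity
    have h2 : (0:ℝ) ≤ Real.pi / B := by positivity
    have h3 : m / (2 * Real.pi * T) * (Real.pi / B) = 1 := by
      rw [hBdef]; field_simp
    rw [hCdef, mul_assoc, ← Real.mul_rpow h1 h2, h3, Real.one_rpow, mul_one]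
  -- mass of the Maxwellian
  have hIntM : Integrable M := by
    have h0 := ((aux_euclid_int0 (D := D) hB).comp_sub_right vb).const_mul C
    refine h0.congr ?_
    filter_upwards with v
    exact (hMv v).symm
  have hMassM : ∫ v, M v = n := by
    have h1 : ∫ v, M v = C * ∫ v : EuclideanSpace ℝ (Fin D),
        Real.exp (-B * ‖v - vb‖ ^ 2) := by
      simp_rw [hMv]
      exact MeasureTheory.integral_const_mul C _
    have h2 : ∫ v : EuclideanSpace ℝ (Fin D), Real.exp (-B * ‖v - vb‖ ^ 2)
        = ∫ v : EuclideanSpace ℝ (Fin D), Real.exp (-B * ‖v‖ ^ 2) :=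
      integral_sub_right_eq_self (fun v : EuclideanSpace ℝ (Fin D) =>
        Real.exp (-B * ‖v‖ ^ 2)) vb
    rw [h1, h2, aux_euclid_mass hB, hCpi]
  -- energy of the Maxwellian
  have hIntEnM : Integrable (fun v => ‖v - vb‖ ^ 2 * M v) := by
    have h0 := ((aux_euclid_int2 (D := D) hB).comp_sub_right vb).const_mul C
    refine h0.congr ?_
    filter_upwards with v
    rw [hMv v]; ring
  have hEnM : ∫ v, ‖v - vb‖ ^ 2 * M v = (D : ℝ) * n * T / m := by
    have h1 : ∫ v, ‖v - vb‖ ^ 2 * M v = C * ∫ v : EuclideanSpace ℝ (Fin D),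
        ‖v - vb‖ ^ 2 * Real.exp (-B * ‖v - vb‖ ^ 2) := by
      simp_rw [hMv]
      rw [← MeasureTheory.integral_const_mul C]
      congr 1; ext v; ring
    have h2 : ∫ v : EuclideanSpace ℝ (Fin D), ‖v - vb‖ ^ 2 * Real.exp (-B * ‖v - vb‖ ^ 2)
        = ∫ v : EuclideanSpace ℝ (Fin D), ‖v‖ ^ 2 * Real.exp (-B * ‖v‖ ^ 2) :=
      integral_sub_right_eq_self (fun v : EuclideanSpace ℝ (Fin D) =>
        ‖v‖ ^ 2 * Real.exp (-B * ‖v‖ ^ 2)) vb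
    rw [h1, h2, aux_euclid_moment hB]
    have : C * ((D : ℝ) / (2 * B) * (Real.pi / B) ^ ((D : ℝ) / 2))
        = (D : ℝ) / (2 * B) * (C * (Real.pi / B) ^ ((D : ℝ) / 2)) := by ring
    rw [this, hCpi, hBdef]
    field_simp
  -- energy of f
  have hIntEnf : Integrable (fun v => ‖v - vb‖ ^ 2 * f v) := by
    have hmeas : AEStronglyMeasurable (fun v : EuclideanSpace ℝ (Fin D) => ‖v - vb‖ ^ 2 * f v)
        volume := by
      exact (((continuous_id.sub continuous_const).norm.pow 2).aestronglyMeasurable).mul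
        hf_int.aestronglyMeasurable
    refine Integrable.mono' (((hf_int.const_mul (2 * ‖vb‖ ^ 2)).add
      (hf_en.const_mul 2))) hmeas ?_
    filter_upwards [hf_pos] with v hv
    have h1 : ‖v - vb‖ ≤ ‖v‖ + ‖vb‖ := norm_sub_le _ _
    have h1' : ‖v - vb‖ ^ 2 ≤ (‖v‖ + ‖vb‖) ^ 2 := by
      have := pow_le_pow_left₀ (norm_nonneg (v - vb)) h1 2
      exact this
    have h2 : ‖v - vb‖ ^ 2 ≤ 2 * ‖v‖ ^ 2 + 2 * ‖vb‖ ^ 2 := by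
      nlinarith [sq_nonneg (‖v‖ - ‖vb‖)]
    have h3 : ‖‖v - vb‖ ^ 2 * f v‖ = ‖v - vb‖ ^ 2 * f v := by
      rw [Real.norm_eq_abs, abs_of_nonneg (by positivity)]
    rw [h3]
    show ‖v - vb‖ ^ 2 * f v ≤ 2 * ‖vb‖ ^ 2 * f v + 2 * (‖v‖ ^ 2 * f v)
    have h4 := mul_le_mul_of_nonneg_right h2 hv.le
    linarith
  have hEnf : ∫ v, ‖v - vb‖ ^ 2 * f v = (D : ℝ) * n * T / m := by
    have h1 : ∫ v, m / 2 * ‖v - vb‖ ^ 2 * f v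
        = m / 2 * ∫ v, ‖v - vb‖ ^ 2 * f v := by
      rw [← MeasureTheory.integral_const_mul]
      congr 1; ext v; ring
    rw [h1] at hT_def
    field_simp at hT_def ⊢
    linarith
  -- ∫ f log M and ∫ M log M agree
  have hval : ∀ (g : EuclideanSpace ℝ (Fin D) → ℝ), Integrable g →
      Integrable (fun v => ‖v - vb‖ ^ 2 * g v) →
      (∫ v, g v) = n → (∫ v, ‖v - vb‖ ^ 2 * g v) = (D : ℝ) * n * T / m →
      ∫ v, g v * Real.log (M v) = Real.log C * n - B * ((D : ℝ) * n * T / m) := by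
    intro g hg hg2 hgn hge
    have hpt : (fun v => g v * Real.log (M v))
        = fun v => Real.log C * g v - B * (‖v - vb‖ ^ 2 * g v) := by
      ext v; rw [hlogM v]; ring
    rw [hpt, integral_sub (hg.const_mul _) (hg2.const_mul _),
      MeasureTheory.integral_const_mul, MeasureTheory.integral_const_mul, hgn, hge]
  have hfM : ∫ v, f v * Real.log (M v) = Real.log C * n - B * ((D : ℝ) * n * T / m) :=
    hval f hf_int hIntEnf hn_def.symm hEnf
  have hMM : ∫ v, M v * Real.log (M v) = Real.log C * n - B * ((D : ℝ) * n * T / m) :=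
    hval M hIntM hIntEnM hMassM hEnM
  -- the entropy inequality
  have hg1 : ∫ v, (M v - f v) * (Real.log (f v) - Real.log (M v)) ≤ 0 := by
    refine integral_nonpos_of_ae ?_
    filter_upwards [hf_pos] with v hv
    rcases le_total (f v) (M v) with h | h
    · have hlog : Real.log (f v) ≤ Real.log (M v) := Real.log_le_log hv h
      exact mul_nonpos_of_nonneg_of_nonpos (sub_nonneg.mpr h) (sub_nonpos.mpr hlog)
    · have hlog : Real.log (M v) ≤ Real.log (f v) := Real.log_le_log (hMpos v) h
      exact mul_nonpos_of_nonpos_of_nonneg (sub_nonpos.mpr h) (sub_nonneg.mpr hlog)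
  have hg1val : ∫ v, (M v - f v) * (Real.log (f v) - Real.log (M v))
      = ((∫ v, M v * Real.log (f v)) - ∫ v, M v * Real.log (M v))
        - ((∫ v, f v * Real.log (f v)) - ∫ v, f v * Real.log (M v)) := by
    have hpt : (fun v => (M v - f v) * (Real.log (f v) - Real.log (M v)))
        = fun v => (M v * Real.log (f v) - M v * Real.log (M v))
          - (f v * Real.log (f v) - f v * Real.log (M v)) := by
      ext v; ring
    have hA : Integrable (fun v => M v * Real.log (f v) - M v * Real.log (M v)) :=
      hMlogf.sub hMlogM
    have hBB : Integrable (fun v => f v * Real.log (f v) - f v * Real.log (M v)) :=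
      hflogf.sub hflogM
    rw [hpt, integral_sub hA hBB, integral_sub hMlogf hMlogM, integral_sub hflogf hflogM]
  have hmain : ∫ v, (M v - f v) * Real.log (f v)
      = (∫ v, M v * Real.log (f v)) - ∫ v, f v * Real.log (f v) := by
    have hpt : (fun v => (M v - f v) * Real.log (f v))
        = fun v => M v * Real.log (f v) - f v * Real.log (f v) := by
      ext v; ring
    rw [hpt, integral_sub hMlogf hflogf]
  rw [hmain]
  rw [hg1val] at hg1
  linarith [hg1, hfM, hMM]
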